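/- For natural numbers T ≥ 1, l ≥ 1 and n, define the signature-match probability P_T(l,n) := (∏_{i=0}^{l−n−1} (1 − i/T)) / T^n, a real number defined for max(0, l−T) ≤ n ≤ l−1. Then P_T(l,n) is monotonically decreasing in n: for every n with max(0, l−T) ≤ n and n + 2 ≤ l, we have P_T(l, n+1) ≤ P_T(l, n). -/

import Mathlib

/-- The signature-match probability `P_T(l,n) = (∏_{i=0}^{l−n−1} (1 − i/T)) / T^n`. -/
noncomputable def sigProb (T l n : ℕ) : ℝ :=
  (∏ i ∈ Finset.range (l - n), (1 - (i : ℝ) / T)) / (T : ℝ) ^ n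

/-- `P_T(l,n)` is monotonically decreasing in `n`:
for `max(0, l−T) ≤ n` and `n + 2 ≤ l`, `P_T(l, n+1) ≤ P_T(l, n)`. -/
theorem sigProb_anti_in_n (T l n : ℕ) (hT : 1 ≤ T) (hl : 1 ≤ l)
    (hn_lo : max 0 (l - T) ≤ n) (hn_hi : n + 2 ≤ l) :
    sigProb T l (n + 1) ≤ sigProb T l n := by
  have hT0 : (0:ℝ) < T := by exact_mod_cast hT
  set m := l - n - 1 with hm
  have hkT : m + 1 ≤ T := by
    have := le_max_right 0 (l - T)
    omega
  have h1 : l - (n + 1) = m := by omega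
  have h2 : l - n = m + 1 := by omega
  have hQnn : (0:ℝ) ≤ ∏ i ∈ Finset.range m, (1 - (i : ℝ) / T) := by
    apply Finset.prod_nonneg
    intro i hi
    simp only [Finset.mem_range] at hi
    have : (i : ℝ) ≤ T := by
      have : i ≤ T := by omega
      exact_mod_cast this
    have : (i : ℝ) / T ≤ 1 := by
      rw [div_le_one hT0]; exact this
    linarith
  have key : (1:ℝ)/T ≤ 1 - (m : ℝ)/T := by
    have hmT : (m : ℝ) + 1 ≤ T := by exact_mod_cast hkT
    rw [le_sub_iff_add_le, ← add_div, div_le_one hT0]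
    linarith
  unfold sigProb
  rw [h1, h2, Finset.prod_range_succ, pow_succ]
  push_cast
  calc (∏ i ∈ Finset.range m, (1 - (i : ℝ) / T)) / ((T:ℝ)^n * T)
      = (∏ i ∈ Finset.range m, (1 - (i : ℝ) / T)) / (T:ℝ)^n * (1/T) := by
        field_simp
    _ ≤ (∏ i ∈ Finset.range m, (1 - (i : ℝ) / T)) / (T:ℝ)^n * (1 - (m : ℝ)/T) := by
        apply mul_le_mul_of_nonneg_left key
        exact div_nonneg hQnn (by positivity)
    _ = (∏ i ∈ Finset.range m, (1 - (i : ℝ) / T)) * (1 - (m : ℝ)/T) / (T:ℝ)^n := by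
        ring
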